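/- arXiv:1910.05532 — 2 statements merged into one kernel-verified Lean document; each statement's English description precedes it below -/
import Mathlib

section
/- For v \in \Delta^{re,+} let O(v) denote the sum of the distinct elements of the \sigma-orbit of v (so O(v) = v if \sigma(v) = v, and O(v) = v + \sigma(v) + \sigma^2(v) if the orbit of v has three elements). Define \underline{\Delta}_0^+ = \{O(\beta) : \beta \in \Delta_0'^+\} and \underline{\Delta}^{re,+} = \{x + m\delta : x \in \underline{\Delta}_0^+, m \in \mathbb{Z}_{\ge 0}\} \cup \{m\delta - x : x \in \underline{\Delta}_0^+, m \in \mathbb{Z}_{\ge 1}\}. Then: (i) for every v \in \Delta^{re,+}, either O(v) \in \mathbb{Z}_{>0}\cdot\delta or O(v) \in \underline{\Delta}^{re,+}; (ii) the assignment \omega \mapsto \sum_{u \in \omega} u defines a bijection from the set of \sigma-orbits \omega on \Delta^{re,+} whose element-sum does not lie in \mathbb{Z}\cdot\delta onto \underline{\Delta}^{re,+} (the positive real root system of affine type G_2^{(1)}). -/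
/-!
Statement 12: For the affine root system of type `E_6^{(1)}` with the admissible
order-3 diagram automorphism `σ` (`α_0 → α_5 → α_1 → α_0`, `α_6 → α_4 → α_2 → α_6`,
`α_3 → α_3`), let `O(v)` be the sum of the distinct elements of the `σ`-orbit of
`v` (`O(v) = v` if `σ(v) = v`, and `O(v) = v + σ(v) + σ²(v)` if the orbit has three
elements), `ulΔ₀⁺ = O(Δ₀'⁺)`, and
`ulΔ^{re,+} = {x + mδ : x ∈ ulΔ₀⁺, m ≥ 0} ∪ {mδ - x : x ∈ ulΔ₀⁺, m ≥ 1}`.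
Then (i) for every positive real root `v`, either `O(v) ∈ ℤ_{>0}·δ` or
`O(v) ∈ ulΔ^{re,+}`; (ii) `ω ↦ ∑_{u ∈ ω} u` is a bijection from the set of
`σ`-orbits on `Δ^{re,+}` whose element-sum is not in `ℤ·δ` onto `ulΔ^{re,+}`
(the positive real roots of type `G_2^{(1)}`).
-/

namespace Stmt12

/-- The root lattice `Q = ⨁_{i ∈ I} ℤ α_i` for `I = {0,1,…,6}`. -/
abbrev Q := Fin 7 → ℤ

/-- The edges of the Dynkin diagram of affine type `E_6^{(1)}`. -/
abbrev epair (i j : ℕ) : Prop :=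
  (i = 1 ∧ j = 2) ∨ (i = 2 ∧ j = 3) ∨ (i = 3 ∧ j = 4) ∨ (i = 4 ∧ j = 5) ∨
  (i = 3 ∧ j = 6) ∨ (i = 0 ∧ j = 6)

abbrev edge (i j : ℕ) : Prop := epair i j ∨ epair j i

/-- The generalized Cartan matrix of type `E_6^{(1)}`. -/
def CM (i j : Fin 7) : ℤ :=
  if i = j then 2 else if edge (i : ℕ) (j : ℕ) then -1 else 0

/-- The symmetric bilinear form `B` on `Q` determined by the Cartan matrix. -/
def B (v w : Q) : ℤ := ∑ i, ∑ j, v i * CM i j * w j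

/-- The set of positive real roots. -/
def ΔrePos : Set Q := {v | (∀ i, 0 ≤ v i) ∧ B v v = 2}

/-- The primitive null root `δ`. -/
def δ : Q := ![1, 1, 2, 3, 2, 1, 2]

/-- The admissible order-3 diagram automorphism `σ` (on coordinates,
`(σ v)_j = v_{p⁻¹(j)}`). -/
def σmap (v : Q) : Q := fun j => v (![1, 5, 4, 3, 6, 0, 2] j)

/-- The `σ`-stable subsystem `Δ₀'` of type `D_4` supported on `{2,3,4,6}`. -/
def Δ0' : Set Q := {v | B v v = 2 ∧ v 0 = 0 ∧ v 1 = 0 ∧ v 5 = 0}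

/-- The positive part `Δ₀'⁺ = Δ₀' ∩ ℕ^I`. -/
def Δ0'Pos : Set Q := {v | v ∈ Δ0' ∧ ∀ i, 0 ≤ v i}

/-- `O(v)`: the sum of the distinct elements of the `σ`-orbit of `v`
(here `σ` has order 3, so `O(v) = v` if `σ(v) = v` and
`O(v) = v + σ(v) + σ²(v)` if the orbit has three elements). -/
noncomputable def O (v : Q) : Q :=
  if σmap v = v then v else v + σmap v + σmap (σmap v)

/-- `ulΔ₀⁺ = {O(β) : β ∈ Δ₀'⁺}` (a positive system of type `G_2`). -/
noncomputable def ulΔ0Pos : Set Q := O '' Δ0'Pos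

/-- `ulΔ^{re,+}`, the positive real roots of affine type `G_2^{(1)}`. -/
noncomputable def ulΔrePos : Set Q :=
  {y | ∃ x ∈ ulΔ0Pos, ∃ m : ℕ, y = x + (m : ℤ) • δ} ∪
  {y | ∃ x ∈ ulΔ0Pos, ∃ m : ℕ, 1 ≤ m ∧ y = (m : ℤ) • δ - x}

/-- The `σ`-orbit of `v`. -/
def orb (v : Q) : Set Q := {w | ∃ k : ℕ, w = σmap^[k] v}

/-- The set of `σ`-orbits on `Δ^{re,+}`. -/
def Orbits : Set (Set Q) := {ω | ∃ v ∈ ΔrePos, ω = orb v}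

/-! ### Auxiliary infrastructure -/

section Aux

lemma CM00 : CM 0 0 = 2 := rfl
lemma CM01 : CM 0 1 = 0 := rfl
lemma CM02 : CM 0 2 = 0 := rfl
lemma CM03 : CM 0 3 = 0 := rfl
lemma CM04 : CM 0 4 = 0 := rfl
lemma CM05 : CM 0 5 = 0 := rfl
lemma CM06 : CM 0 6 = -1 := rfl
lemma CM10 : CM 1 0 = 0 := rfl
lemma CM11 : CM 1 1 = 2 := rfl
lemma CM12 : CM 1 2 = -1 := rfl
lemma CM13 : CM 1 3 = 0 := rfl
lemma CM14 : CM 1 4 = 0 := rfl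
lemma CM15 : CM 1 5 = 0 := rfl
lemma CM16 : CM 1 6 = 0 := rfl
lemma CM20 : CM 2 0 = 0 := rfl
lemma CM21 : CM 2 1 = -1 := rfl
lemma CM22 : CM 2 2 = 2 := rfl
lemma CM23 : CM 2 3 = -1 := rfl
lemma CM24 : CM 2 4 = 0 := rfl
lemma CM25 : CM 2 5 = 0 := rfl
lemma CM26 : CM 2 6 = 0 := rfl
lemma CM30 : CM 3 0 = 0 := rfl
lemma CM31 : CM 3 1 = 0 := rfl
lemma CM32 : CM 3 2 = -1 := rfl
lemma CM33 : CM 3 3 = 2 := rfl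
lemma CM34 : CM 3 4 = -1 := rfl
lemma CM35 : CM 3 5 = 0 := rfl
lemma CM36 : CM 3 6 = -1 := rfl
lemma CM40 : CM 4 0 = 0 := rfl
lemma CM41 : CM 4 1 = 0 := rfl
lemma CM42 : CM 4 2 = 0 := rfl
lemma CM43 : CM 4 3 = -1 := rfl
lemma CM44 : CM 4 4 = 2 := rfl
lemma CM45 : CM 4 5 = -1 := rfl
lemma CM46 : CM 4 6 = 0 := rfl
lemma CM50 : CM 5 0 = 0 := rfl
lemma CM51 : CM 5 1 = 0 := rfl
lemma CM52 : CM 5 2 = 0 := rfl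
lemma CM53 : CM 5 3 = 0 := rfl
lemma CM54 : CM 5 4 = -1 := rfl
lemma CM55 : CM 5 5 = 2 := rfl
lemma CM56 : CM 5 6 = 0 := rfl
lemma CM60 : CM 6 0 = -1 := rfl
lemma CM61 : CM 6 1 = 0 := rfl
lemma CM62 : CM 6 2 = 0 := rfl
lemma CM63 : CM 6 3 = -1 := rfl
lemma CM64 : CM 6 4 = 0 := rfl
lemma CM65 : CM 6 5 = 0 := rfl
lemma CM66 : CM 6 6 = 2 := rfl


lemma B_eval (v w : Q) : B v w =
    2*(v 0*w 0 + v 1*w 1 + v 2*w 2 + v 3*w 3 + v 4*w 4 + v 5*w 5 + v 6*w 6)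
    - (v 1*w 2 + v 2*w 1 + v 2*w 3 + v 3*w 2 + v 3*w 4 + v 4*w 3 + v 4*w 5 + v 5*w 4
       + v 3*w 6 + v 6*w 3 + v 0*w 6 + v 6*w 0) := by
  simp only [B, Fin.sum_univ_seven, CM00, CM01, CM02, CM03, CM04, CM05, CM06, CM10, CM11, CM12,
    CM13, CM14, CM15, CM16, CM20, CM21, CM22, CM23, CM24, CM25, CM26, CM30, CM31, CM32, CM33,
    CM34, CM35, CM36, CM40, CM41, CM42, CM43, CM44, CM45, CM46, CM50, CM51, CM52, CM53, CM54,
    CM55, CM56, CM60, CM61, CM62, CM63, CM64, CM65, CM66]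
  ring

lemma dv0 : δ 0 = 1 := rfl
lemma dv1 : δ 1 = 1 := rfl
lemma dv2 : δ 2 = 2 := rfl
lemma dv3 : δ 3 = 3 := rfl
lemma dv4 : δ 4 = 2 := rfl
lemma dv5 : δ 5 = 1 := rfl
lemma dv6 : δ 6 = 2 := rfl

lemma δ_bounds : ∀ i, 1 ≤ δ i ∧ δ i ≤ 3 := by decide

lemma σ_add (a b : Q) : σmap (a + b) = σmap a + σmap b := rfl
lemma σ_smul (c : ℤ) (a : Q) : σmap (c • a) = c • σmap a := rfl
lemma σ_neg (a : Q) : σmap (-a) = -σmap a := rfl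
lemma σ_sub (a b : Q) : σmap (a - b) = σmap a - σmap b := rfl
lemma σ_delta : σmap δ = δ := by funext j; fin_cases j <;> rfl
lemma σ_iter3 (v : Q) : σmap (σmap (σmap v)) = v := by funext j; fin_cases j <;> rfl

lemma σ_inj {u v : Q} (h : σmap u = σmap v) : u = v := by
  have h2 := congrArg (fun x => σmap (σmap x)) h
  simp only [σ_iter3] at h2
  exact h2

lemma σ_shift (β : Q) (c : ℤ) : σmap (β + c • δ) = σmap β + c • δ := by
  rw [σ_add, σ_smul, σ_delta]

lemma sv0 (v : Q) : σmap v 0 = v 1 := rfl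
lemma sv1 (v : Q) : σmap v 1 = v 5 := rfl
lemma sv2 (v : Q) : σmap v 2 = v 4 := rfl
lemma sv3 (v : Q) : σmap v 3 = v 3 := rfl
lemma sv4 (v : Q) : σmap v 4 = v 6 := rfl
lemma sv5 (v : Q) : σmap v 5 = v 0 := rfl
lemma sv6 (v : Q) : σmap v 6 = v 2 := rfl

lemma σ_B (v : Q) : B (σmap v) (σmap v) = B v v := by
  simp only [B_eval, sv0, sv1, sv2, sv3, sv4, sv5, sv6]; ring

lemma σ_mem (v : Q) (hv : v ∈ ΔrePos) : σmap v ∈ ΔrePos :=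
  ⟨fun i => hv.1 _, by rw [σ_B]; exact hv.2⟩

lemma B_shift (β : Q) (c : ℤ) : B (β + c • δ) (β + c • δ) = B β β := by
  simp only [B_eval, Pi.add_apply, Pi.smul_apply, smul_eq_mul,
    dv0, dv1, dv2, dv3, dv4, dv5, dv6]
  ring

lemma B_negshift (β : Q) (c : ℤ) : B (c • δ - β) (c • δ - β) = B β β := by
  simp only [B_eval, Pi.sub_apply, Pi.smul_apply, smul_eq_mul,
    dv0, dv1, dv2, dv3, dv4, dv5, dv6]
  ring

lemma eta (v : Q) (h0 : v 0 = 0) : v = ![0, v 1, v 2, v 3, v 4, v 5, v 6] := by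
  funext i; fin_cases i
  · exact h0
  all_goals rfl

end Aux

section Data
/-- The 36 positive roots of the finite `E₆` subsystem (coords 1..6). -/
def L36 : List Q := [![0, 0, 0, 0, 0, 0, 1],
  ![0, 0, 0, 0, 0, 1, 0],
  ![0, 0, 0, 0, 1, 0, 0],
  ![0, 0, 0, 0, 1, 1, 0],
  ![0, 0, 0, 1, 0, 0, 0],
  ![0, 0, 0, 1, 0, 0, 1],
  ![0, 0, 0, 1, 1, 0, 0],
  ![0, 0, 0, 1, 1, 0, 1],
  ![0, 0, 0, 1, 1, 1, 0],
  ![0, 0, 0, 1, 1, 1, 1],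
  ![0, 0, 1, 0, 0, 0, 0],
  ![0, 0, 1, 1, 0, 0, 0],
  ![0, 0, 1, 1, 0, 0, 1],
  ![0, 0, 1, 1, 1, 0, 0],
  ![0, 0, 1, 1, 1, 0, 1],
  ![0, 0, 1, 1, 1, 1, 0],
  ![0, 0, 1, 1, 1, 1, 1],
  ![0, 0, 1, 2, 1, 0, 1],
  ![0, 0, 1, 2, 1, 1, 1],
  ![0, 0, 1, 2, 2, 1, 1],
  ![0, 1, 0, 0, 0, 0, 0],
  ![0, 1, 1, 0, 0, 0, 0],
  ![0, 1, 1, 1, 0, 0, 0],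
  ![0, 1, 1, 1, 0, 0, 1],
  ![0, 1, 1, 1, 1, 0, 0],
  ![0, 1, 1, 1, 1, 0, 1],
  ![0, 1, 1, 1, 1, 1, 0],
  ![0, 1, 1, 1, 1, 1, 1],
  ![0, 1, 1, 2, 1, 0, 1],
  ![0, 1, 1, 2, 1, 1, 1],
  ![0, 1, 1, 2, 2, 1, 1],
  ![0, 1, 2, 2, 1, 0, 1],
  ![0, 1, 2, 2, 1, 1, 1],
  ![0, 1, 2, 2, 2, 1, 1],
  ![0, 1, 2, 3, 2, 1, 1],
  ![0, 1, 2, 3, 2, 1, 2]]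

/-- All 72 finite `E₆` roots. -/
def L72 : List Q := L36 ++ L36.map (fun b => -b)

def shortL : List Q := [![0,0,0,1,0,0,0], ![0,0,1,1,1,0,1], ![0,0,1,2,1,0,1]]
def longL : List Q := [![0,0,1,0,1,0,1], ![0,0,1,3,1,0,1], ![0,0,2,3,2,0,2]]

/-- `S(β) = β + σβ + σ²β`. -/
def Sm (v : Q) : Q := v + σmap v + σmap (σmap v)

/-- Normalization: subtract the `δ`-part. -/
def Tm (v : Q) : Q := Sm v - (Sm v 0) • δ

def N1 (v : Q) : Q := σmap v - (σmap v 0) • δ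
def N2 (v : Q) : Q := σmap (σmap v) - (σmap (σmap v) 0) • δ

set_option maxRecDepth 40000 in
set_option maxHeartbeats 2000000 in
lemma box : ∀ a ∈ Finset.Icc (-1:ℤ) 1, ∀ b ∈ Finset.Icc (-2:ℤ) 2, ∀ c ∈ Finset.Icc (-3:ℤ) 3,
    ∀ d ∈ Finset.Icc (-2:ℤ) 2, ∀ e ∈ Finset.Icc (-1:ℤ) 1, ∀ f ∈ Finset.Icc (-2:ℤ) 2,
    a*a+b*b+c*c+d*d+e*e+f*f - (a*b+b*c+c*d+d*e+c*f) = 1 →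
    ![0,a,b,c,d,e,f] ∈ L72 := by decide

set_option maxHeartbeats 3000000 in
/-- finite E₆ root classification. -/
lemma C1 (β : Q) (h0 : β 0 = 0) (hB : B β β = 2) : β ∈ L72 := by
  rw [B_eval, h0] at hB
  set a := β 1 with h1; set b := β 2 with h2; set c := β 3 with h3
  set d := β 4 with h4; set e := β 5 with h5; set f := β 6 with h6
  have hq : a*a+b*b+c*c+d*d+e*e+f*f - (a*b+b*c+c*d+d*e+c*f) = 1 := by linarith
  have ha : 3*(a*a) ≤ 8 := by
    nlinarith [sq_nonneg (2*b - c - a), sq_nonneg (3*c - 2*d - 2*f - a),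
      sq_nonneg (4*d - 3*e - 2*f - a), sq_nonneg (5*e - 2*f - a), sq_nonneg (4*f - 3*a)]
  have hb : 3*(b*b) ≤ 20 := by
    nlinarith [sq_nonneg (2*a - b), sq_nonneg (2*c - d - f - b),
      sq_nonneg (3*d - 2*e - f - b), sq_nonneg (4*e - f - b), sq_nonneg (5*f - 3*b)]
  have hc : c*c ≤ 12 := by
    nlinarith [sq_nonneg (2*a - b), sq_nonneg (3*b - 2*c), sq_nonneg (2*d - e - c),
      sq_nonneg (3*e - c), sq_nonneg (2*f - c)]
  have hd : 3*(d*d) ≤ 20 := by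
    nlinarith [sq_nonneg (2*a - b), sq_nonneg (3*b - 2*c), sq_nonneg (4*c - 3*f - 3*d),
      sq_nonneg (2*e - d), sq_nonneg (5*f - 3*d)]
  have he : 3*(e*e) ≤ 8 := by
    nlinarith [sq_nonneg (2*a - b), sq_nonneg (3*b - 2*c), sq_nonneg (4*c - 3*d - 3*f),
      sq_nonneg (5*d - 3*f - 4*e), sq_nonneg (4*f - 3*e)]
  have hf : f*f ≤ 4 := by
    nlinarith [sq_nonneg (2*a - b), sq_nonneg (3*b - 2*c), sq_nonneg (4*c - 3*d - 3*f),
      sq_nonneg (5*d - 4*e - 3*f), sq_nonneg (2*e - f)]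
  have ba : -1 ≤ a ∧ a ≤ 1 := by constructor <;> nlinarith [ha]
  have bb : -2 ≤ b ∧ b ≤ 2 := by constructor <;> nlinarith [hb]
  have bc : -3 ≤ c ∧ c ≤ 3 := by constructor <;> nlinarith [hc]
  have bd : -2 ≤ d ∧ d ≤ 2 := by constructor <;> nlinarith [hd]
  have be : -1 ≤ e ∧ e ≤ 1 := by constructor <;> nlinarith [he]
  have bf : -2 ≤ f ∧ f ≤ 2 := by constructor <;> nlinarith [hf]
  have hmem := box a (Finset.mem_Icc.mpr ba) b (Finset.mem_Icc.mpr bb) c (Finset.mem_Icc.mpr bc)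
    d (Finset.mem_Icc.mpr bd) e (Finset.mem_Icc.mpr be) f (Finset.mem_Icc.mpr bf) hq
  rw [eta β h0]
  exact hmem

end Data

section FC

lemma O_fixed {v : Q} (h : σmap v = v) : O v = v := by unfold O; rw [if_pos h]
lemma O_nonfixed {v : Q} (h : ¬ σmap v = v) : O v = v + σmap v + σmap (σmap v) := by
  unfold O; rw [if_neg h]

set_option maxHeartbeats 1000000 in
lemma FC5 : ∀ β ∈ L36, B β β = 2 ∧ β 0 = 0 ∧ β ≠ 0 ∧ (∀ i, 0 ≤ β i) ∧ (∀ i, β i ≤ δ i) := by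
  decide

lemma FC6 : ∀ β ∈ L36, σmap β = β → β ∈ shortL := by decide

lemma FCshort : ∀ x ∈ shortL, σmap x = x ∧ x 1 = 0 ∧ x 5 = 0 ∧ x ∈ L36 := by decide

set_option maxHeartbeats 1000000 in
lemma FC7 : ∀ β ∈ L72, σmap β ≠ β → (Tm β = 0 ∨ Tm β ∈ longL ∨ -Tm β ∈ longL) := by decide

set_option maxRecDepth 40000 in
set_option maxHeartbeats 4000000 in
lemma FC8 : ∀ β ∈ L72, ∀ γ ∈ L72, σmap β ≠ β → σmap γ ≠ γ → Tm β ≠ 0 → Tm β = Tm γ →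
    (Sm β 0 - Sm γ 0) % 3 = 0 → (γ = β ∨ γ = N1 β ∨ γ = N2 β) := by decide

lemma FC10 : ∀ γ ∈ L36, γ 1 = 0 → γ 5 = 0 →
    ((σmap γ = γ ∧ γ ∈ shortL) ∨ (σmap γ ≠ γ ∧ Sm γ ∈ longL)) := by decide

lemma FCul_long : ∀ x ∈ longL, x 0 = 0 ∧ 1 ≤ x 2 := by decide
lemma FCul_short : ∀ x ∈ shortL, x 0 = 0 ∧ 1 ≤ x 3 := by decide

lemma FCdisj : ∀ s ∈ shortL, ∀ t ∈ longL,
    s ≠ 0 ∧ -s ≠ 0 ∧ s ≠ t ∧ s ≠ -t ∧ -s ≠ t ∧ -s ≠ -t := by decide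

lemma short_mem : ∀ x ∈ shortL, x ∈ ulΔ0Pos := by
  intro x hx
  simp only [shortL, List.mem_cons, List.not_mem_nil, or_false] at hx
  rcases hx with rfl | rfl | rfl <;>
    exact ⟨_, ⟨⟨by decide, by decide, by decide, by decide⟩, by decide⟩, O_fixed (by decide)⟩

lemma long_mem : ∀ x ∈ longL, x ∈ ulΔ0Pos := by
  intro x hx
  simp only [longL, List.mem_cons, List.not_mem_nil, or_false] at hx
  rcases hx with rfl | rfl | rfl
  · exact ⟨![0,0,1,0,0,0,0], ⟨⟨by decide, by decide, by decide, by decide⟩, by decide⟩,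
      by rw [O_nonfixed (by decide)]; decide⟩
  · exact ⟨![0,0,1,1,0,0,0], ⟨⟨by decide, by decide, by decide, by decide⟩, by decide⟩,
      by rw [O_nonfixed (by decide)]; decide⟩
  · exact ⟨![0,0,1,1,1,0,0], ⟨⟨by decide, by decide, by decide, by decide⟩, by decide⟩,
      by rw [O_nonfixed (by decide)]; decide⟩

lemma wit : ∀ x ∈ longL, ∀ r : ℕ, r < 3 → ∃ w ∈ L36, σmap w ≠ w ∧ Sm w = x + (r:ℤ) • δ := by
  intro x hx r hr
  simp only [longL, List.mem_cons, List.not_mem_nil, or_false] at hx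
  rcases hx with rfl | rfl | rfl
  · interval_cases r
    · exact ⟨![0,0,0,0,0,0,1], by decide, by decide, by decide⟩
    · exact ⟨![0,0,1,1,1,1,1], by decide, by decide, by decide⟩
    · exact ⟨![0,1,2,2,2,1,1], by decide, by decide, by decide⟩
  · interval_cases r
    · exact ⟨![0,0,0,1,0,0,1], by decide, by decide, by decide⟩
    · exact ⟨![0,0,1,2,1,1,1], by decide, by decide, by decide⟩
    · exact ⟨![0,1,2,3,2,1,1], by decide, by decide, by decide⟩
  · interval_cases r
    · exact ⟨![0,0,0,1,1,0,1], by decide, by decide, by decide⟩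
    · exact ⟨![0,0,1,2,2,1,1], by decide, by decide, by decide⟩
    · exact ⟨![0,1,2,3,2,1,2], by decide, by decide, by decide⟩

end FC

section Struct

lemma B_subshift (u : Q) (c : ℤ) : B (u - c • δ) (u - c • δ) = B u u := by
  simp only [B_eval, Pi.sub_apply, Pi.smul_apply, smul_eq_mul,
    dv0, dv1, dv2, dv3, dv4, dv5, dv6]
  ring

lemma exists_pos_coord {v : Q} (hnn : ∀ i, 0 ≤ v i) (hB : B v v = 2) : ∃ i, 1 ≤ v i := by
  by_contra h
  push_neg at h
  have hv0 : v = 0 := funext fun i => by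
    have h1 := h i
    have h2 := hnn i
    show v i = 0
    omega
  rw [hv0] at hB
  simp [B_eval] at hB

lemma pos_of_mem {v : Q} (h72 : v ∈ L72) (hnn : ∀ i, 0 ≤ v i) : v ∈ L36 := by
  rcases List.mem_append.mp h72 with h | h
  · exact h
  · rcases List.mem_map.mp h with ⟨γ, hγ, hEq⟩
    obtain ⟨_, _, hne, hγnn, _⟩ := FC5 γ hγ
    exfalso
    apply hne
    funext i
    have h1 := hnn i
    have h2 := hγnn i
    have h4 : v i = -(γ i) := by rw [← hEq]; rfl
    show γ i = 0
    omega

lemma classify {v : Q} (hv : v ∈ ΔrePos) : ∃ β ∈ L72, v = β + (v 0) • δ := by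
  have h0 : (v - (v 0) • δ) 0 = 0 := by
    have : (v - (v 0) • δ) 0 = v 0 - v 0 * δ 0 := rfl
    rw [this, dv0]; ring
  have hBβ : B (v - (v 0) • δ) (v - (v 0) • δ) = 2 := by rw [B_subshift]; exact hv.2
  refine ⟨v - (v 0) • δ, C1 _ h0 hBβ, ?_⟩
  funext i
  show v i = v i - v 0 * δ i + v 0 * δ i
  ring

lemma mk_mem {β : Q} (hβ : β ∈ L36) {m : ℤ} (hm : 0 ≤ m) : β + m • δ ∈ ΔrePos := by
  obtain ⟨hB2, _, _, hnn, _⟩ := FC5 β hβ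
  refine ⟨fun i => ?_, by rw [B_shift]; exact hB2⟩
  have h1 := hnn i
  have h2 := (δ_bounds i).1
  have h3 : (β + m • δ) i = β i + m * δ i := rfl
  rw [h3]; nlinarith

lemma mk_mem_neg {β : Q} (hβ : β ∈ L36) {m : ℤ} (hm : 1 ≤ m) : m • δ - β ∈ ΔrePos := by
  obtain ⟨hB2, _, _, hnn, hub⟩ := FC5 β hβ
  refine ⟨fun i => ?_, by rw [B_negshift]; exact hB2⟩
  have h1 := hub i
  have h2 := (δ_bounds i).1
  have h3 : (m • δ - β) i = m * δ i - β i := rfl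
  rw [h3]; nlinarith

lemma Sm_sigma (u : Q) : Sm (σmap u) = Sm u := by
  unfold Sm; rw [σ_iter3]; abel

lemma Sm_neg (u : Q) : Sm (-u) = -Sm u := by
  unfold Sm; rw [σ_neg, σ_neg]; abel

lemma Sm0 (u : Q) : Sm u 0 = u 0 + u 1 + u 5 := rfl

lemma fix_shift {β : Q} {c : ℤ} : σmap (β + c • δ) = β + c • δ ↔ σmap β = β := by
  rw [σ_shift]
  constructor
  · intro h; exact add_right_cancel h
  · intro h; rw [h]

lemma Oform {u β : Q} {c : ℤ} (hu : u = β + c • δ) (hnf : σmap u ≠ u) :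
    O u = Sm β + (3 * c) • δ := by
  rw [O_nonfixed hnf, hu, σ_shift, σ_shift]
  unfold Sm
  funext i
  show β i + c * δ i + (σmap β i + c * δ i) + (σmap (σmap β) i + c * δ i)
      = β i + σmap β i + σmap (σmap β) i + 3 * c * δ i
  ring

lemma iter_cases (v : Q) (k : ℕ) :
    σmap^[k] v = v ∨ σmap^[k] v = σmap v ∨ σmap^[k] v = σmap (σmap v) := by
  induction k with
  | zero => left; rfl
  | succ n ih =>
    rw [Function.iterate_succ_apply']
    rcases ih with h | h | h
    · right; left; rw [h]
    · right; right; rw [h]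
    · left; rw [h, σ_iter3]

lemma orb_triple (v : Q) : orb v = {v, σmap v, σmap (σmap v)} := by
  ext w
  constructor
  · rintro ⟨k, rfl⟩
    rcases iter_cases v k with h | h | h <;> rw [h] <;>
      simp [Set.mem_insert_iff, Set.mem_singleton_iff]
  · intro hw
    rcases hw with rfl | rfl | rfl
    · exact ⟨0, rfl⟩
    · exact ⟨1, rfl⟩
    · exact ⟨2, rfl⟩

lemma orb_sigma (v : Q) : orb (σmap v) = orb v := by
  rw [orb_triple, orb_triple, σ_iter3]
  ext w
  simp only [Set.mem_insert_iff, Set.mem_singleton_iff]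
  tauto

lemma sum_orb (v : Q) : ∑ᶠ u ∈ orb v, u = O v := by
  rw [orb_triple]
  by_cases h : σmap v = v
  · have hs : ({v, σmap v, σmap (σmap v)} : Set Q) = {v} := by rw [h, h]; simp
    rw [hs, finsum_mem_singleton, O_fixed h]
  · have h2 : σmap (σmap v) ≠ v := by
      intro he
      apply h
      have h3 := congrArg σmap he
      rw [σ_iter3] at h3
      exact h3.symm
    have h3 : σmap (σmap v) ≠ σmap v := fun he => h (σ_inj he)
    have hcoe : ({v, σmap v, σmap (σmap v)} : Set Q)
        = (({v, σmap v, σmap (σmap v)} : Finset Q) : Set Q) := by simp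
    rw [hcoe, finsum_mem_coe_finset]
    rw [Finset.sum_insert (by
      simp only [Finset.mem_insert, Finset.mem_singleton]
      push_neg
      exact ⟨fun hh => h hh.symm, fun hh => h2 hh.symm⟩)]
    rw [Finset.sum_insert (by
      simp only [Finset.mem_singleton]
      exact fun hh => h3 hh.symm)]
    rw [Finset.sum_singleton, O_nonfixed h]
    exact (add_assoc _ _ _).symm

end Struct

section Part1

lemma part1 : ∀ v ∈ ΔrePos, (∃ m : ℤ, 0 < m ∧ O v = m • δ) ∨ O v ∈ ulΔrePos := by
  intro v hv
  obtain ⟨β, h72, hveq⟩ := classify hv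
  have hm0 : 0 ≤ v 0 := hv.1 0
  set m := v 0 with hmdef
  by_cases hfix : σmap v = v
  · -- σ-fixed case
    have hβfix : σmap β = β := by
      apply fix_shift.mp
      rw [← hveq]
      exact hfix
    right
    rcases List.mem_append.mp h72 with h36 | hneg
    · have hsh := FC6 β h36 hβfix
      have hul : β ∈ ulΔ0Pos := short_mem β hsh
      exact Or.inl ⟨β, hul, (m).toNat, by
        rw [O_fixed hfix, Int.toNat_of_nonneg hm0]; exact hveq⟩
    · rcases List.mem_map.mp hneg with ⟨γ, hγ36, hEq⟩
      have hγfix : σmap γ = γ := by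
        have h1 : σmap (-γ) = -γ := by rw [hEq]; exact hβfix
        rw [σ_neg] at h1
        exact neg_injective h1
      have hsh := FC6 γ hγ36 hγfix
      have hul : γ ∈ ulΔ0Pos := short_mem γ hsh
      obtain ⟨_, _, hne, hnnγ, _⟩ := FC5 γ hγ36
      have hm1 : 1 ≤ m := by
        by_contra hc
        push_neg at hc
        have hm00 : m = 0 := by omega
        apply hne
        funext i
        have h1 := hv.1 i
        have h2 := hnnγ i
        have h4 : v i = β i + m * δ i := congrFun hveq i
        have h5 : β i = -(γ i) := (congrFun hEq i).symm
        show γ i = 0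
        rw [hm00] at h4
        omega
      refine Or.inr ⟨γ, hul, (m).toNat, by omega, ?_⟩
      rw [O_fixed hfix, Int.toNat_of_nonneg hm0, hveq, ← hEq]
      funext i
      show -(γ i) + m * δ i = m * δ i - γ i
      ring
  · -- 3-element orbit case
    have hβnf : ¬ σmap β = β := fun h => hfix (by rw [hveq]; exact fix_shift.mpr h)
    have hO : O v = Sm β + (3 * m) • δ := Oform hveq hfix
    have hOnn : ∀ i, 0 ≤ O v i := by
      intro i
      rw [O_nonfixed hfix]
      exact add_nonneg (add_nonneg (hv.1 i) (hv.1 _)) (hv.1 _)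
    have hk0 : O v 0 = Sm β 0 + 3 * m := by
      rw [hO]
      show Sm β 0 + (3 * m) * δ 0 = Sm β 0 + 3 * m
      rw [dv0]; ring
    have hkT : O v = Tm β + (Sm β 0 + 3 * m) • δ := by
      rw [hO]
      unfold Tm
      funext i
      show Sm β i + (3 * m) * δ i = (Sm β i - Sm β 0 * δ i) + (Sm β 0 + 3 * m) * δ i
      ring
    have hknn : 0 ≤ Sm β 0 + 3 * m := by rw [← hk0]; exact hOnn 0
    rcases FC7 β h72 hβnf with hT0 | hTl | hTnl
    · left
      have hOk : O v = (Sm β 0 + 3 * m) • δ := by rw [hkT, hT0, zero_add]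
      obtain ⟨i, hi⟩ := exists_pos_coord hv.1 hv.2
      have hvO : v i ≤ O v i := by
        rw [O_nonfixed hfix]
        have h2 : 0 ≤ σmap v i := hv.1 _
        have h3 : 0 ≤ σmap (σmap v) i := hv.1 _
        show v i ≤ v i + σmap v i + σmap (σmap v) i
        omega
      have hdi := δ_bounds i
      have hki : O v i = (Sm β 0 + 3 * m) * δ i := congrFun hOk i
      refine ⟨Sm β 0 + 3 * m, ?_, hOk⟩
      nlinarith [hi, hdi.1, hdi.2, hvO, hki]
    · refine Or.inr (Or.inl ⟨Tm β, long_mem _ hTl, (Sm β 0 + 3 * m).toNat, ?_⟩)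
      rw [Int.toNat_of_nonneg hknn]
      exact hkT
    · obtain ⟨hx0, hx2⟩ := FCul_long _ hTnl
      have hOx : O v = (Sm β 0 + 3 * m) • δ - (-Tm β) := by
        rw [hkT]
        funext i
        show Tm β i + (Sm β 0 + 3 * m) * δ i = (Sm β 0 + 3 * m) * δ i - (-(Tm β i))
        ring
      have hk1 : 1 ≤ Sm β 0 + 3 * m := by
        have h1 : 0 ≤ O v 2 := hOnn 2
        have h2 : O v 2 = (Sm β 0 + 3 * m) * δ 2 - (-Tm β) 2 := congrFun hOx 2
        have h3 : (-Tm β) 2 = -(Tm β 2) := rfl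
        rw [dv2, h3] at h2
        have h4 : 1 ≤ -(Tm β 2) := hx2
        omega
      refine Or.inr (Or.inr ⟨-Tm β, long_mem _ hTnl, (Sm β 0 + 3 * m).toNat, by omega, ?_⟩)
      rw [Int.toNat_of_nonneg (by omega)]
      exact hOx

end Part1

section Part2

lemma mem72 : ∀ β ∈ L72, β 0 = 0 ∧ β ≠ 0 := by decide

lemma nonfix_sigma {v : Q} (h : σmap v ≠ v) : σmap (σmap v) ≠ σmap v :=
  fun he => h (σ_inj he)

lemma O_sigma (v : Q) : O (σmap v) = O v := by
  by_cases h : σmap v = v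
  · rw [h]
  · rw [O_nonfixed (nonfix_sigma h), O_nonfixed h, σ_iter3]
    abel

/-- Contradiction: a `σ`-fixed positive root cannot have the same `O`-value as a
non-fixed one (given the value is what it is). -/
lemma mixed_absurd {v w : Q} (hv : v ∈ ΔrePos) (hw : w ∈ ΔrePos) (hfv : σmap v = v)
    (hfw : ¬ σmap w = w) (hOvw : O v = O w) : False := by
  obtain ⟨β, h72v, hveq⟩ := classify hv
  obtain ⟨γ, h72w, hweq⟩ := classify hw
  set m := v 0 with hmdef
  set n := w 0 with hndef
  have hβfix : σmap β = β := fix_shift.mp (by rw [← hveq]; exact hfv)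
  have hγnf : ¬ σmap γ = γ := fun h => hfw (by rw [hweq]; exact fix_shift.mpr h)
  have h1 : v = Sm γ + (3 * n) • δ := by
    rw [← O_fixed hfv, hOvw]; exact Oform hweq hfw
  have E : β + (m) • δ = Sm γ + (3 * n) • δ := by rw [← hveq]; exact h1
  have hβ0 : β 0 = 0 := (mem72 β h72v).1
  have e0 : m = Sm γ 0 + 3 * n := by
    have h' : β 0 + m * δ 0 = Sm γ 0 + (3 * n) * δ 0 := congrFun E 0
    rw [dv0] at h'
    omega
  have hβT : β = Tm γ := by
    funext i
    have h' : β i + m * δ i = Sm γ i + (3 * n) * δ i := congrFun E i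
    show β i = Sm γ i - Sm γ 0 * δ i
    linear_combination h' - δ i * e0
  rcases FC7 γ h72w hγnf with hT | hT | hT
  · exact (mem72 β h72v).2 (by rw [hβT, hT])
  · rcases List.mem_append.mp h72v with h36 | hneg
    · obtain ⟨_, _, hne, _, _⟩ := FCdisj β (FC6 β h36 hβfix) (Tm γ) hT
      exact hne hβT
    · rcases List.mem_map.mp hneg with ⟨γ', h36', hEq⟩
      have hfix' : σmap γ' = γ' := by
        have h2 : σmap (-γ') = -γ' := by rw [hEq]; exact hβfix
        rw [σ_neg] at h2
        exact neg_injective h2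
      obtain ⟨_, _, _, _, h5, _⟩ := FCdisj γ' (FC6 γ' h36' hfix') (Tm γ) hT
      exact h5 (by rw [hEq]; exact hβT)
  · rcases List.mem_append.mp h72v with h36 | hneg
    · obtain ⟨_, _, _, h4, _, _⟩ := FCdisj β (FC6 β h36 hβfix) (-Tm γ) hT
      exact h4 (by rw [neg_neg]; exact hβT)
    · rcases List.mem_map.mp hneg with ⟨γ', h36', hEq⟩
      have hfix' : σmap γ' = γ' := by
        have h2 : σmap (-γ') = -γ' := by rw [hEq]; exact hβfix
        rw [σ_neg] at h2
        exact neg_injective h2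
      obtain ⟨_, _, _, _, _, h6⟩ := FCdisj γ' (FC6 γ' h36' hfix') (-Tm γ) hT
      exact h6 (by rw [neg_neg, hEq]; exact hβT)

lemma injon : Set.InjOn (fun ω => ∑ᶠ u ∈ ω, u)
    {ω ∈ Orbits | ¬ ∃ m : ℤ, (∑ᶠ u ∈ ω, u) = m • δ} := by
  rintro ω₁ ⟨⟨v, hv, rfl⟩, hnd1⟩ ω₂ ⟨⟨w, hw, rfl⟩, hnd2⟩ heq
  have hOvw : O v = O w := by
    rw [← sum_orb v, ← sum_orb w]
    exact heq
  have hnd1' : ¬ ∃ m' : ℤ, O v = m' • δ := by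
    rintro ⟨m', hm'⟩
    exact hnd1 ⟨m', by rw [sum_orb]; exact hm'⟩
  by_cases hfv : σmap v = v <;> by_cases hfw : σmap w = w
  · rw [O_fixed hfv, O_fixed hfw] at hOvw
    rw [hOvw]
  · exact absurd (mixed_absurd hv hw hfv hfw hOvw) not_false
  · exact absurd (mixed_absurd hw hv hfw hfv hOvw.symm) not_false
  · -- both non-fixed
    obtain ⟨β, h72v, hveq⟩ := classify hv
    obtain ⟨γ, h72w, hweq⟩ := classify hw
    set m := v 0 with hmdef
    set n := w 0 with hndef
    have hβnf : ¬ σmap β = β := fun h => hfv (by rw [hveq]; exact fix_shift.mpr h)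
    have hγnf : ¬ σmap γ = γ := fun h => hfw (by rw [hweq]; exact fix_shift.mpr h)
    have E : Sm β + (3 * m) • δ = Sm γ + (3 * n) • δ := by
      rw [← Oform hveq hfv, hOvw, Oform hweq hfw]
    have e0 : Sm β 0 + 3 * m = Sm γ 0 + 3 * n := by
      have h' : Sm β 0 + (3 * m) * δ 0 = Sm γ 0 + (3 * n) * δ 0 := congrFun E 0
      rw [dv0] at h'
      omega
    have hTT : Tm β = Tm γ := by
      funext i
      have h' : Sm β i + (3 * m) * δ i = Sm γ i + (3 * n) * δ i := congrFun E i
      show Sm β i - Sm β 0 * δ i = Sm γ i - Sm γ 0 * δ i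
      linear_combination h' - δ i * e0
    have hTne : Tm β ≠ 0 := by
      intro hT0
      apply hnd1'
      refine ⟨Sm β 0 + 3 * m, ?_⟩
      rw [Oform hveq hfv]
      funext i
      have hTi : Sm β i - Sm β 0 * δ i = 0 := congrFun hT0 i
      show Sm β i + (3 * m) * δ i = (Sm β 0 + 3 * m) * δ i
      linear_combination hTi
    have hdiv : (Sm β 0 - Sm γ 0) % 3 = 0 := by omega
    rcases FC8 β h72v γ h72w hβnf hγnf hTne hTT hdiv with hγc | hγc | hγc
    · -- γ = β
      have hvw : w = v := by
        rw [hweq, hveq, hγc]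
        have : n = m := by rw [hγc] at e0; omega
        rw [this]
      rw [hvw]
    · -- γ = N1 β
      have hσv : σmap v = N1 β + (m + σmap β 0) • δ := by
        have h1 : σmap v = σmap β + (m) • δ := by rw [hveq, σ_shift]
        rw [h1]
        unfold N1
        funext i
        show σmap β i + m * δ i = (σmap β i - σmap β 0 * δ i) + (m + σmap β 0) * δ i
        ring
      have hOu : O (σmap v) = Sm (N1 β) + (3 * (m + σmap β 0)) • δ :=
        Oform hσv (nonfix_sigma hfv)
      have hOw : O w = Sm (N1 β) + (3 * n) • δ := by
        rw [Oform hweq hfw, hγc]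
      have hE2 : Sm (N1 β) + (3 * (m + σmap β 0)) • δ = Sm (N1 β) + (3 * n) • δ := by
        rw [← hOu, O_sigma, hOvw, hOw]
      have hw0 : n = m + σmap β 0 := by
        have h' : Sm (N1 β) 0 + (3 * (m + σmap β 0)) * δ 0
            = Sm (N1 β) 0 + (3 * n) * δ 0 := congrFun hE2 0
        rw [dv0] at h'
        omega
      have hwv : w = σmap v := by rw [hweq, hγc, hw0]; exact hσv.symm
      rw [hwv, orb_sigma]
    · -- γ = N2 β
      have hσv : σmap (σmap v) = N2 β + (m + σmap (σmap β) 0) • δ := by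
        have h1 : σmap (σmap v) = σmap (σmap β) + (m) • δ := by
          rw [hveq, σ_shift, σ_shift]
        rw [h1]
        unfold N2
        funext i
        show σmap (σmap β) i + m * δ i
            = (σmap (σmap β) i - σmap (σmap β) 0 * δ i) + (m + σmap (σmap β) 0) * δ i
        ring
      have hOu : O (σmap (σmap v)) = Sm (N2 β) + (3 * (m + σmap (σmap β) 0)) • δ :=
        Oform hσv (nonfix_sigma (nonfix_sigma hfv))
      have hOw : O w = Sm (N2 β) + (3 * n) • δ := by
        rw [Oform hweq hfw, hγc]
      have hE2 : Sm (N2 β) + (3 * (m + σmap (σmap β) 0)) • δ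
          = Sm (N2 β) + (3 * n) • δ := by
        rw [← hOu, O_sigma, O_sigma, hOvw, hOw]
      have hw0 : n = m + σmap (σmap β) 0 := by
        have h' : Sm (N2 β) 0 + (3 * (m + σmap (σmap β) 0)) * δ 0
            = Sm (N2 β) 0 + (3 * n) * δ 0 := congrFun hE2 0
        rw [dv0] at h'
        omega
      have hwv : w = σmap (σmap v) := by rw [hweq, hγc, hw0]; exact hσv.symm
      rw [hwv, orb_sigma, orb_sigma]

lemma mapsto : Set.MapsTo (fun ω => ∑ᶠ u ∈ ω, u)
    {ω ∈ Orbits | ¬ ∃ m : ℤ, (∑ᶠ u ∈ ω, u) = m • δ} ulΔrePos := by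
  rintro ω ⟨⟨v, hv, rfl⟩, hnd⟩
  show (∑ᶠ u ∈ orb v, u) ∈ ulΔrePos
  rw [sum_orb]
  rcases part1 v hv with ⟨m', _, hOv⟩ | h
  · exact absurd ⟨m', by rw [sum_orb]; exact hOv⟩ hnd
  · exact h

end Part2

section Part3

lemma surjon : Set.SurjOn (fun ω => ∑ᶠ u ∈ ω, u)
    {ω ∈ Orbits | ¬ ∃ m : ℤ, (∑ᶠ u ∈ ω, u) = m • δ} ulΔrePos := by
  intro y hy
  have build : ∀ v ∈ ΔrePos, O v = y → (¬ ∃ m' : ℤ, y = m' • δ) →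
      y ∈ (fun ω => ∑ᶠ u ∈ ω, u) '' {ω ∈ Orbits | ¬ ∃ m : ℤ, (∑ᶠ u ∈ ω, u) = m • δ} := by
    intro v hv hOy hnot
    refine ⟨orb v, ⟨⟨v, hv, rfl⟩, ?_⟩, ?_⟩
    · rintro ⟨m', hm'⟩
      rw [sum_orb, hOy] at hm'
      exact hnot ⟨m', hm'⟩
    · show (∑ᶠ u ∈ orb v, u) = y
      rw [sum_orb, hOy]
  rcases hy with ⟨x, ⟨γ, hγ, hOγ⟩, mm, hyeq⟩ | ⟨x, ⟨γ, hγ, hOγ⟩, mm, hm1, hyeq⟩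
  · -- y = x + mm • δ
    have hγ36 : γ ∈ L36 := pos_of_mem (C1 γ hγ.1.2.1 hγ.1.1) hγ.2
    rcases FC10 γ hγ36 hγ.1.2.2.1 hγ.1.2.2.2 with ⟨hfix, hsh⟩ | ⟨hnf, hSl⟩
    · -- short case : v = γ + mm δ
      have hxγ : x = γ := by rw [← hOγ, O_fixed hfix]
      obtain ⟨hγ0, hγ3⟩ := FCul_short γ hsh
      have hvmem : γ + (mm : ℤ) • δ ∈ ΔrePos := mk_mem hγ36 (Int.natCast_nonneg mm)
      have hvfix : σmap (γ + (mm : ℤ) • δ) = γ + (mm : ℤ) • δ := fix_shift.mpr hfix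
      refine build _ hvmem ?_ ?_
      · rw [O_fixed hvfix, hyeq, hxγ]
      · rintro ⟨m', hm'⟩
        rw [hyeq, hxγ] at hm'
        have h0' : γ 0 + (mm : ℤ) * δ 0 = m' * δ 0 := congrFun hm' 0
        have h3' : γ 3 + (mm : ℤ) * δ 3 = m' * δ 3 := congrFun hm' 3
        rw [dv0] at h0'
        rw [dv3] at h3'
        omega
    · -- long case
      have hxS : x = Sm γ := by rw [← hOγ]; exact O_nonfixed hnf
      have hxl : x ∈ longL := by rw [hxS]; exact hSl
      obtain ⟨hx0, hx2⟩ := FCul_long x hxl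
      obtain ⟨w, hw36, hwnf, hSw⟩ := wit x hxl (mm % 3) (Nat.mod_lt _ (by norm_num))
      have hq0 : (0 : ℤ) ≤ ((mm / 3 : ℕ) : ℤ) := Int.natCast_nonneg _
      have hvmem : w + ((mm / 3 : ℕ) : ℤ) • δ ∈ ΔrePos := mk_mem hw36 hq0
      have hvnf : σmap (w + ((mm / 3 : ℕ) : ℤ) • δ) ≠ w + ((mm / 3 : ℕ) : ℤ) • δ :=
        fun h => hwnf (fix_shift.mp h)
      have hqr : (mm : ℤ) = 3 * ((mm / 3 : ℕ) : ℤ) + ((mm % 3 : ℕ) : ℤ) := by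
        have h := Nat.div_add_mod mm 3
        omega
      refine build _ hvmem ?_ ?_
      · rw [Oform rfl hvnf, hSw, hyeq]
        funext i
        show (x i + ((mm % 3 : ℕ) : ℤ) * δ i) + (3 * ((mm / 3 : ℕ) : ℤ)) * δ i
            = x i + (mm : ℤ) * δ i
        rw [hqr]; ring
      · rintro ⟨m', hm'⟩
        rw [hyeq] at hm'
        have h0' : x 0 + (mm : ℤ) * δ 0 = m' * δ 0 := congrFun hm' 0
        have h2' : x 2 + (mm : ℤ) * δ 2 = m' * δ 2 := congrFun hm' 2
        rw [dv0] at h0'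
        rw [dv2] at h2'
        omega
  · -- y = mm • δ - x
    have hγ36 : γ ∈ L36 := pos_of_mem (C1 γ hγ.1.2.1 hγ.1.1) hγ.2
    have hmm1 : (1 : ℤ) ≤ (mm : ℤ) := by exact_mod_cast hm1
    rcases FC10 γ hγ36 hγ.1.2.2.1 hγ.1.2.2.2 with ⟨hfix, hsh⟩ | ⟨hnf, hSl⟩
    · have hxγ : x = γ := by rw [← hOγ, O_fixed hfix]
      obtain ⟨hγ0, hγ3⟩ := FCul_short γ hsh
      have hvmem : (mm : ℤ) • δ - γ ∈ ΔrePos := mk_mem_neg hγ36 hmm1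
      have hvfix : σmap ((mm : ℤ) • δ - γ) = (mm : ℤ) • δ - γ := by
        rw [σ_sub, σ_smul, σ_delta, hfix]
      refine build _ hvmem ?_ ?_
      · rw [O_fixed hvfix, hyeq, hxγ]
      · rintro ⟨m', hm'⟩
        rw [hyeq, hxγ] at hm'
        have h0' : (mm : ℤ) * δ 0 - γ 0 = m' * δ 0 := congrFun hm' 0
        have h3' : (mm : ℤ) * δ 3 - γ 3 = m' * δ 3 := congrFun hm' 3
        rw [dv0] at h0'
        rw [dv3] at h3'
        omega
    · have hxS : x = Sm γ := by rw [← hOγ]; exact O_nonfixed hnf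
      have hxl : x ∈ longL := by rw [hxS]; exact hSl
      obtain ⟨hx0, hx2⟩ := FCul_long x hxl
      obtain ⟨w, hw36, hwnf, hSw⟩ := wit x hxl ((3 - mm % 3) % 3) (Nat.mod_lt _ (by norm_num))
      have hr3 : mm % 3 < 3 := Nat.mod_lt _ (by norm_num)
      have hdvd : (mm + (3 - mm % 3) % 3) % 3 = 0 := by omega
      have hq1 : 1 ≤ (mm + (3 - mm % 3) % 3) / 3 := by omega
      have hq1' : (1 : ℤ) ≤ (((mm + (3 - mm % 3) % 3) / 3 : ℕ) : ℤ) := by exact_mod_cast hq1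
      have hvmem : (((mm + (3 - mm % 3) % 3) / 3 : ℕ) : ℤ) • δ - w ∈ ΔrePos :=
        mk_mem_neg hw36 hq1'
      have hveq' : (((mm + (3 - mm % 3) % 3) / 3 : ℕ) : ℤ) • δ - w
          = (-w) + (((mm + (3 - mm % 3) % 3) / 3 : ℕ) : ℤ) • δ := by
        funext i
        show (((mm + (3 - mm % 3) % 3) / 3 : ℕ) : ℤ) * δ i - w i
            = -(w i) + (((mm + (3 - mm % 3) % 3) / 3 : ℕ) : ℤ) * δ i
        ring
      have hvnf : σmap ((((mm + (3 - mm % 3) % 3) / 3 : ℕ) : ℤ) • δ - w)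
          ≠ (((mm + (3 - mm % 3) % 3) / 3 : ℕ) : ℤ) • δ - w := by
        intro h
        apply hwnf
        rw [σ_sub, σ_smul, σ_delta] at h
        funext i
        have h4 := congrFun h i
        have h5 : (((mm + (3 - mm % 3) % 3) / 3 : ℕ) : ℤ) * δ i - σmap w i
            = (((mm + (3 - mm % 3) % 3) / 3 : ℕ) : ℤ) * δ i - w i := h4
        linarith
      have hqr : 3 * ((((mm + (3 - mm % 3) % 3) / 3 : ℕ)) : ℤ)
          = (mm : ℤ) + (((3 - mm % 3) % 3 : ℕ) : ℤ) := by
        have h := Nat.div_add_mod (mm + (3 - mm % 3) % 3) 3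
        omega
      refine build _ hvmem ?_ ?_
      · rw [Oform hveq' hvnf, Sm_neg, hSw, hyeq]
        funext i
        show -(x i + (((3 - mm % 3) % 3 : ℕ) : ℤ) * δ i)
            + (3 * ((((mm + (3 - mm % 3) % 3) / 3 : ℕ)) : ℤ)) * δ i
            = (mm : ℤ) * δ i - x i
        rw [hqr]; ring
      · rintro ⟨m', hm'⟩
        rw [hyeq] at hm'
        have h0' : (mm : ℤ) * δ 0 - x 0 = m' * δ 0 := congrFun hm' 0
        have h2' : (mm : ℤ) * δ 2 - x 2 = m' * δ 2 := congrFun hm' 2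
        rw [dv0] at h0'
        rw [dv2] at h2'
        omega

end Part3

theorem statement12 :
    (∀ v ∈ ΔrePos, (∃ m : ℤ, 0 < m ∧ O v = m • δ) ∨ O v ∈ ulΔrePos) ∧
    Set.BijOn (fun ω => ∑ᶠ u ∈ ω, u)
      {ω ∈ Orbits | ¬ ∃ m : ℤ, (∑ᶠ u ∈ ω, u) = m • δ}
      ulΔrePos :=
  ⟨part1, mapsto, injon, surjon⟩
end Stmt12
end

section
/- Let c_1, \dots, c_r \in \mathbb{Z}[q,q^{-1}] be finitely many Laurent polynomials such that \sum_{i=1}^r c_i^2 lies in \mathbb{Z}[q] and has constant term 1 (i.e., \sum_{i=1}^r c_i^2 \in 1 + q\,\mathbb{Z}[q]). Then every c_i lies in \mathbb{Z}[q], one has \sum_{i=1}^r c_i(0)^2 = 1, and consequently there is exactly one index i_0 with c_{i_0}(0) = \pm 1, while c_i(0) = 0 for all i \ne i_0. -/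
/-!
Statement 13: If `c_1, …, c_r ∈ ℤ[q,q⁻¹]` are Laurent polynomials such that
`∑ᵢ cᵢ²` lies in `ℤ[q]` and has constant term `1`, then every `cᵢ` lies in
`ℤ[q]`, `∑ᵢ cᵢ(0)² = 1`, and there is exactly one index `i₀` with
`c_{i₀}(0) = ±1` while `cᵢ(0) = 0` for all `i ≠ i₀`.

Here membership of a Laurent polynomial in `ℤ[q]` is expressed as being in the
image of `Polynomial.toLaurent`, and `f k` denotes the coefficient of `q^k` of
the Laurent polynomial `f` (so `f 0` is its constant term).
-/

open LaurentPolynomial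

lemma neg_coeff_toLaurent (p : Polynomial ℤ) (k : ℤ) (hk : k < 0) :
    (Polynomial.toLaurent p).coeff k = 0 := by
  rw [LaurentPolynomial.coeff_toLaurent]
  apply Finsupp.mapDomain_notin_range
  rintro ⟨n, rfl⟩
  simp at hk
  omega

lemma exists_poly_of_nonneg_support (f : LaurentPolynomial ℤ)
    (h : ∀ k < (0:ℤ), f.coeff k = 0) :
    ∃ p : Polynomial ℤ, Polynomial.toLaurent p = f := by
  refine ⟨trunc f, ?_⟩
  apply AddMonoidAlgebra.coeff_injective
  rw [LaurentPolynomial.coeff_toLaurent]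
  have htr : (trunc f : Polynomial ℤ).toFinsupp.coeff
      = Finsupp.comapDomain (Nat.cast : ℕ → ℤ) f.coeff
        (Set.injOn_of_injective Int.ofNat_injective) := rfl
  rw [htr]
  refine Finsupp.mapDomain_comapDomain _ Int.ofNat_injective f.coeff ?_
  intro x hx
  have hx' : f.coeff x ≠ 0 := Finsupp.mem_support_iff.mp hx
  have hx0 : 0 ≤ x := le_of_not_gt fun hl => hx' (h x hl)
  exact ⟨x.toNat, Int.toNat_of_nonneg hx0⟩

lemma sq_coeff (f : LaurentPolynomial ℤ) (m : ℤ) (h : ∀ k < m, f.coeff k = 0) :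
    (f * f).coeff (2 * m) = f.coeff m * f.coeff m := by
  classical
  rw [AddMonoidAlgebra.coeff_mul]
  have hsupp : ∀ a ∈ f.coeff.support, m ≤ a := fun a ha =>
    le_of_not_gt fun hl => Finsupp.mem_support_iff.mp ha (h a hl)
  have hin : (if m ∈ f.coeff.support then f.coeff m * f.coeff m else 0) = f.coeff m * f.coeff m := by
    split_ifs with hm
    · rfl
    · rw [Finsupp.notMem_support_iff.mp hm]; ring
  calc f.coeff.sum (fun a ba => f.coeff.sum fun b bb => if a + b = 2*m then ba * bb else 0)
      = ∑ a ∈ f.coeff.support, ∑ b ∈ f.coeff.support,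
          (if a = m then (if b = m then f.coeff m * f.coeff m else 0) else 0) := by
        refine Finset.sum_congr rfl fun a ha => Finset.sum_congr rfl fun b hb => ?_
        have h1 := hsupp a ha; have h2 := hsupp b hb
        by_cases ha' : a = m
        · by_cases hb' : b = m
          · simp [ha', hb', two_mul]
          · have hab : ¬(m + b = 2*m) := by omega
            simp [ha', hb', hab]
        · have hab : ¬(a + b = 2*m) := by omega
          simp [hab, ha']
    _ = ∑ a ∈ f.coeff.support, (if a = m then f.coeff m * f.coeff m else 0) := by
        refine Finset.sum_congr rfl fun a _ => ?_
        by_cases ha' : a = m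
        · simp only [ha', if_true]
          rw [Finset.sum_ite_eq' f.coeff.support m (fun _ => f.coeff m * f.coeff m), hin]
        · simp [ha']
    _ = f.coeff m * f.coeff m := by
        rw [Finset.sum_ite_eq' f.coeff.support m (fun _ => f.coeff m * f.coeff m), hin]

theorem statement13 (r : ℕ) (c : Fin r → LaurentPolynomial ℤ)
    (hpoly : ∃ p : Polynomial ℤ, Polynomial.toLaurent p = ∑ i, c i ^ 2)
    (hconst : (∑ i, c i ^ 2).coeff (0 : ℤ) = 1) :
    (∀ i, ∃ p : Polynomial ℤ, Polynomial.toLaurent p = c i) ∧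
    (∑ i, ((c i).coeff (0 : ℤ)) ^ 2 = 1) ∧
    (∃! i₀ : Fin r,
      ((c i₀).coeff (0 : ℤ) = 1 ∨ (c i₀).coeff (0 : ℤ) = -1) ∧
      ∀ i : Fin r, i ≠ i₀ → (c i).coeff (0 : ℤ) = 0) := by
  classical
  obtain ⟨p, hp⟩ := hpoly
  have hneg : ∀ i, ∀ k < (0:ℤ), (c i).coeff k = 0 := by
    by_contra hcon
    push_neg at hcon
    obtain ⟨i, k, hk, hck⟩ := hcon
    set S : Finset ℤ := Finset.univ.biUnion (fun j => (c j).coeff.support) with hS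
    have hne : S.Nonempty :=
      ⟨k, Finset.mem_biUnion.mpr ⟨i, Finset.mem_univ i, Finsupp.mem_support_iff.mpr hck⟩⟩
    set m := S.min' hne with hm
    have hmk : m ≤ k := Finset.min'_le _ _
      (Finset.mem_biUnion.mpr ⟨i, Finset.mem_univ i, Finsupp.mem_support_iff.mpr hck⟩)
    have hmlt : m < 0 := lt_of_le_of_lt hmk hk
    have hbelow : ∀ j, ∀ l < m, (c j).coeff l = 0 := by
      intro j l hl
      by_contra hne'
      exact absurd (Finset.min'_le S l
        (Finset.mem_biUnion.mpr ⟨j, Finset.mem_univ j, Finsupp.mem_support_iff.mpr hne'⟩))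
        (not_le.mpr hl)
    have hcoeff : (∑ j, c j ^ 2).coeff (2 * m) = ∑ j, ((c j).coeff m) ^ 2 := by
      rw [AddMonoidAlgebra.coeff_sum, Finsupp.finset_sum_apply]
      refine Finset.sum_congr rfl fun j _ => ?_
      rw [pow_two, pow_two, sq_coeff (c j) m (hbelow j)]
    have hzero : (∑ j, c j ^ 2).coeff (2 * m) = 0 := by
      rw [← hp]; exact neg_coeff_toLaurent p _ (by omega)
    have hsum0 : ∑ j, ((c j).coeff m) ^ 2 = 0 := by rw [← hcoeff, hzero]
    have hall : ∀ j, ((c j).coeff m) ^ 2 = 0 := fun j =>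
      (Finset.sum_eq_zero_iff_of_nonneg (fun j _ => sq_nonneg ((c j).coeff m))).mp hsum0 j
        (Finset.mem_univ j)
    obtain ⟨j, _, hj⟩ := Finset.mem_biUnion.mp (S.min'_mem hne)
    exact Finsupp.mem_support_iff.mp hj (by
      have := hall j
      nlinarith [this])
  have h2 : ∀ j, (c j ^ 2).coeff (0:ℤ) = ((c j).coeff (0:ℤ)) ^ 2 := by
    intro j
    have hsq := sq_coeff (c j) 0 (hneg j)
    rw [mul_zero] at hsq
    rw [pow_two, hsq, pow_two]
  have hsum : ∑ i, ((c i).coeff (0:ℤ)) ^ 2 = 1 := by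
    rw [← hconst, AddMonoidAlgebra.coeff_sum, Finsupp.finset_sum_apply]
    exact Finset.sum_congr rfl fun j _ => (h2 j).symm
  refine ⟨fun i => exists_poly_of_nonneg_support _ (hneg i), hsum, ?_⟩
  have hexists : ∃ i, (c i).coeff (0:ℤ) ≠ 0 := by
    by_contra hall
    push_neg at hall
    rw [Finset.sum_eq_zero (fun i _ => by rw [hall i]; ring)] at hsum
    exact absurd hsum (by norm_num)
  obtain ⟨i₀, hi₀⟩ := hexists
  have h1le : 1 ≤ ((c i₀).coeff (0:ℤ)) ^ 2 := by
    exact (one_le_sq_iff_one_le_abs ((c i₀).coeff (0:ℤ))).mpr (Int.one_le_abs hi₀)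
  have hsplit : ((c i₀).coeff (0:ℤ)) ^ 2 + ∑ i ∈ Finset.univ.erase i₀, ((c i).coeff (0:ℤ)) ^ 2 = 1 := by
    rw [← hsum]
    exact Finset.add_sum_erase Finset.univ (fun i => ((c i).coeff (0:ℤ)) ^ 2) (Finset.mem_univ i₀)
  have hrest_nonneg : 0 ≤ ∑ i ∈ Finset.univ.erase i₀, ((c i).coeff (0:ℤ)) ^ 2 :=
    Finset.sum_nonneg fun i _ => sq_nonneg _
  have hrest0 : ∑ i ∈ Finset.univ.erase i₀, ((c i).coeff (0:ℤ)) ^ 2 = 0 := by linarith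
  have hsq1 : ((c i₀).coeff (0:ℤ)) ^ 2 = 1 := by linarith
  have hzero_of : ∀ i : Fin r, i ≠ i₀ → (c i).coeff (0:ℤ) = 0 := by
    intro i hi
    have := (Finset.sum_eq_zero_iff_of_nonneg (fun i _ => sq_nonneg ((c i).coeff (0:ℤ)))).mp
      hrest0 i (Finset.mem_erase.mpr ⟨hi, Finset.mem_univ i⟩)
    nlinarith [this]
  have hpm : (c i₀).coeff (0:ℤ) = 1 ∨ (c i₀).coeff (0:ℤ) = -1 := by
    rcases Int.eq_one_or_neg_one_of_mul_eq_one' (by rw [← pow_two]; exact hsq1) with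
      ⟨h1, _⟩ | ⟨h1, _⟩
    · exact Or.inl h1
    · exact Or.inr h1
  refine ⟨i₀, ⟨hpm, hzero_of⟩, fun y hy => ?_⟩
  by_contra h
  exact hi₀ (hy.2 i₀ fun e => h e.symm)
end
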